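/- Let (Ω, 𝓕, P) be a probability space, let H be a real inner product space (e.g., ℝ^d), and let A₁, A₂, A₃, A₄, A₅ : Ω → H be random vectors with finite second moments such that E[⟨A₁, A₅⟩] = 0 and E[⟨A₂, A₅⟩] = 0. Then for every β with 0 < β ≤ 1: E[‖A₁ + A₂ + A₃ + A₄ + A₅‖²] ≤ (1+β)·E[‖A₁‖²] + (3 + 3/β)·E[‖A₂‖²] + (4 + 3/β)·E[‖A₃‖²] + (4 + 3/β)·E[‖A₄‖²] + 3·E[‖A₅‖²]. -/

import Mathlib

open MeasureTheory
open scoped InnerProductSpace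

private lemma young_aux {H : Type*} [NormedAddCommGroup H] [InnerProductSpace ℝ H]
    (x y : H) (c : ℝ) (hc : 0 < c) :
    2 * ⟪x, y⟫_ℝ ≤ c * ‖x‖ ^ 2 + c⁻¹ * ‖y‖ ^ 2 := by
  have h := real_inner_le_norm x y
  have hx := norm_nonneg x
  have hy := norm_nonneg y
  rw [← sub_nonneg]
  have key : c * (c * ‖x‖ ^ 2 + c⁻¹ * ‖y‖ ^ 2 - 2 * ⟪x, y⟫_ℝ) ≥ 0 := by
    have : c * c⁻¹ = 1 := mul_inv_cancel₀ hc.ne'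
    nlinarith [sq_nonneg (c * ‖x‖ - ‖y‖)]
  have h0 : c * 0 ≤ c * (c * ‖x‖ ^ 2 + c⁻¹ * ‖y‖ ^ 2 - 2 * ⟪x, y⟫_ℝ) := by linarith
  have := le_of_mul_le_mul_left h0 hc
  linarith

private lemma pointwise_aux {H : Type*} [NormedAddCommGroup H] [InnerProductSpace ℝ H]
    (a b c d e : H) (β : ℝ) (hβ0 : 0 < β) (hβ1 : β ≤ 1) :
    ‖a + b + c + d + e‖ ^ 2 ≤ (1 + β) * ‖a‖ ^ 2 + (3 + 3 / β) * ‖b‖ ^ 2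
      + (4 + 3 / β) * ‖c‖ ^ 2 + (4 + 3 / β) * ‖d‖ ^ 2 + 3 * ‖e‖ ^ 2
      + 2 * ⟪a, e⟫_ℝ + 2 * ⟪b, e⟫_ℝ := by
  have hexp : ‖a + b + c + d + e‖ ^ 2 = ‖a‖ ^ 2 + ‖b‖ ^ 2 + ‖c‖ ^ 2 + ‖d‖ ^ 2 + ‖e‖ ^ 2
      + 2 * ⟪a, b⟫_ℝ + 2 * ⟪a, c⟫_ℝ + 2 * ⟪a, d⟫_ℝ + 2 * ⟪a, e⟫_ℝ
      + 2 * ⟪b, c⟫_ℝ + 2 * ⟪b, d⟫_ℝ + 2 * ⟪b, e⟫_ℝ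
      + 2 * ⟪c, d⟫_ℝ + 2 * ⟪c, e⟫_ℝ + 2 * ⟪d, e⟫_ℝ := by
    have : ‖a + b + c + d + e‖ ^ 2 = ⟪a + b + c + d + e, a + b + c + d + e⟫_ℝ :=
      (real_inner_self_eq_norm_sq _).symm
    simp only [inner_add_left, inner_add_right, real_inner_self_eq_norm_sq] at this
    rw [this]
    rw [real_inner_comm b a, real_inner_comm c a, real_inner_comm d a, real_inner_comm e a,
      real_inner_comm c b, real_inner_comm d b, real_inner_comm e b,
      real_inner_comm d c, real_inner_comm e c, real_inner_comm e d]
    ring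
  have hβ3 : 0 < β / 3 := by linarith
  have hinv : (β / 3)⁻¹ = 3 / β := by
    rw [inv_div]
  have h12 := young_aux a b (β / 3) hβ3
  have h13 := young_aux a c (β / 3) hβ3
  have h14 := young_aux a d (β / 3) hβ3
  rw [hinv] at h12 h13 h14
  have h23 := young_aux b c 1 one_pos
  have h24 := young_aux b d 1 one_pos
  have h34 := young_aux c d 1 one_pos
  have h35 := young_aux c e 1 one_pos
  have h45 := young_aux d e 1 one_pos
  simp only [one_mul, inv_one] at h23 h24 h34 h35 h45
  rw [hexp]
  linarith

/-- **Young-type bound on the second moment of a sum of five random vectors.**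
If `A₁,…,A₅ : Ω → H` have finite second moments and `E⟪A₁,A₅⟫ = E⟪A₂,A₅⟫ = 0`, then for
`0 < β ≤ 1`,
`E‖A₁+A₂+A₃+A₄+A₅‖² ≤ (1+β)E‖A₁‖² + (3+3/β)E‖A₂‖² + (4+3/β)E‖A₃‖² + (4+3/β)E‖A₄‖² + 3E‖A₅‖²`. -/
theorem five_term_young_bound
    {Ω : Type*} [MeasurableSpace Ω] (P : Measure Ω) [IsProbabilityMeasure P]
    {H : Type*} [NormedAddCommGroup H] [InnerProductSpace ℝ H] [CompleteSpace H]
    (A₁ A₂ A₃ A₄ A₅ : Ω → H)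
    (hA₁ : MemLp A₁ 2 P) (hA₂ : MemLp A₂ 2 P) (hA₃ : MemLp A₃ 2 P)
    (hA₄ : MemLp A₄ 2 P) (hA₅ : MemLp A₅ 2 P)
    (h15 : ∫ ω, ⟪A₁ ω, A₅ ω⟫_ℝ ∂P = 0)
    (h25 : ∫ ω, ⟪A₂ ω, A₅ ω⟫_ℝ ∂P = 0)
    (β : ℝ) (hβ0 : 0 < β) (hβ1 : β ≤ 1) :
    ∫ ω, ‖A₁ ω + A₂ ω + A₃ ω + A₄ ω + A₅ ω‖ ^ 2 ∂P ≤
      (1 + β) * ∫ ω, ‖A₁ ω‖ ^ 2 ∂P + (3 + 3 / β) * ∫ ω, ‖A₂ ω‖ ^ 2 ∂P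
        + (4 + 3 / β) * ∫ ω, ‖A₃ ω‖ ^ 2 ∂P + (4 + 3 / β) * ∫ ω, ‖A₄ ω‖ ^ 2 ∂P
        + 3 * ∫ ω, ‖A₅ ω‖ ^ 2 ∂P := by
  -- integrability facts
  have hsq : ∀ (f : Ω → H), MemLp f 2 P → Integrable (fun ω => ‖f ω‖ ^ 2) P := fun f hf =>
    hf.norm.integrable_sq
  have h1 := hsq _ hA₁
  have h2 := hsq _ hA₂
  have h3 := hsq _ hA₃
  have h4 := hsq _ hA₄
  have h5 := hsq _ hA₅
  have hinner : ∀ (f g : Ω → H), MemLp f 2 P → MemLp g 2 P →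
      Integrable (fun ω => ⟪f ω, g ω⟫_ℝ) P := by
    intro f g hf hg
    refine Integrable.mono' ((hsq f hf).add (hsq g hg)) (hf.aestronglyMeasurable.inner
      hg.aestronglyMeasurable) (Filter.Eventually.of_forall fun ω => ?_)
    have h := abs_real_inner_le_norm (f ω) (g ω)
    have := sq_nonneg (‖f ω‖ - ‖g ω‖)
    simp only [Real.norm_eq_abs, Pi.add_apply]
    nlinarith [norm_nonneg (f ω), norm_nonneg (g ω)]
  have h15i := hinner _ _ hA₁ hA₅
  have h25i := hinner _ _ hA₂ hA₅
  have hsum : MemLp (fun ω => A₁ ω + A₂ ω + A₃ ω + A₄ ω + A₅ ω) 2 P :=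
    (((hA₁.add hA₂).add hA₃).add hA₄).add hA₅
  have hL := hsq _ hsum
  -- RHS integrable
  have hR : Integrable (fun ω => (1 + β) * ‖A₁ ω‖ ^ 2 + (3 + 3 / β) * ‖A₂ ω‖ ^ 2
      + (4 + 3 / β) * ‖A₃ ω‖ ^ 2 + (4 + 3 / β) * ‖A₄ ω‖ ^ 2 + 3 * ‖A₅ ω‖ ^ 2
      + 2 * ⟪A₁ ω, A₅ ω⟫_ℝ + 2 * ⟪A₂ ω, A₅ ω⟫_ℝ) P := by
    exact (((((((h1.const_mul _).add (h2.const_mul _)).add (h3.const_mul _)).add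
      (h4.const_mul _)).add (h5.const_mul _)).add (h15i.const_mul _)).add (h25i.const_mul _))
  calc ∫ ω, ‖A₁ ω + A₂ ω + A₃ ω + A₄ ω + A₅ ω‖ ^ 2 ∂P
      ≤ ∫ ω, ((1 + β) * ‖A₁ ω‖ ^ 2 + (3 + 3 / β) * ‖A₂ ω‖ ^ 2
          + (4 + 3 / β) * ‖A₃ ω‖ ^ 2 + (4 + 3 / β) * ‖A₄ ω‖ ^ 2 + 3 * ‖A₅ ω‖ ^ 2
          + 2 * ⟪A₁ ω, A₅ ω⟫_ℝ + 2 * ⟪A₂ ω, A₅ ω⟫_ℝ) ∂P := by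
        refine integral_mono hL hR fun ω => ?_
        exact pointwise_aux _ _ _ _ _ β hβ0 hβ1
    _ = (1 + β) * ∫ ω, ‖A₁ ω‖ ^ 2 ∂P + (3 + 3 / β) * ∫ ω, ‖A₂ ω‖ ^ 2 ∂P
        + (4 + 3 / β) * ∫ ω, ‖A₃ ω‖ ^ 2 ∂P + (4 + 3 / β) * ∫ ω, ‖A₄ ω‖ ^ 2 ∂P
        + 3 * ∫ ω, ‖A₅ ω‖ ^ 2 ∂P := by
      have i1 := h1.const_mul (1 + β)
      have i2 := h2.const_mul (3 + 3 / β)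
      have i3 := h3.const_mul (4 + 3 / β)
      have i4 := h4.const_mul (4 + 3 / β)
      have i5 := h5.const_mul (3 : ℝ)
      have j1 := h15i.const_mul (2 : ℝ)
      have j2 := h25i.const_mul (2 : ℝ)
      have k2 : Integrable (fun ω => (1 + β) * ‖A₁ ω‖ ^ 2 + (3 + 3 / β) * ‖A₂ ω‖ ^ 2) P :=
        i1.add i2
      have k3 : Integrable (fun ω => (1 + β) * ‖A₁ ω‖ ^ 2 + (3 + 3 / β) * ‖A₂ ω‖ ^ 2
          + (4 + 3 / β) * ‖A₃ ω‖ ^ 2) P := k2.add i3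
      have k4 : Integrable (fun ω => (1 + β) * ‖A₁ ω‖ ^ 2 + (3 + 3 / β) * ‖A₂ ω‖ ^ 2
          + (4 + 3 / β) * ‖A₃ ω‖ ^ 2 + (4 + 3 / β) * ‖A₄ ω‖ ^ 2) P := k3.add i4
      have k5 : Integrable (fun ω => (1 + β) * ‖A₁ ω‖ ^ 2 + (3 + 3 / β) * ‖A₂ ω‖ ^ 2
          + (4 + 3 / β) * ‖A₃ ω‖ ^ 2 + (4 + 3 / β) * ‖A₄ ω‖ ^ 2 + 3 * ‖A₅ ω‖ ^ 2) P := k4.add i5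
      have k6 : Integrable (fun ω => (1 + β) * ‖A₁ ω‖ ^ 2 + (3 + 3 / β) * ‖A₂ ω‖ ^ 2
          + (4 + 3 / β) * ‖A₃ ω‖ ^ 2 + (4 + 3 / β) * ‖A₄ ω‖ ^ 2 + 3 * ‖A₅ ω‖ ^ 2
          + 2 * ⟪A₁ ω, A₅ ω⟫_ℝ) P := k5.add j1
      rw [integral_add k6 j2, integral_add k5 j1, integral_add k4 i5, integral_add k3 i4,
        integral_add k2 i3, integral_add i1 i2,
        integral_const_mul, integral_const_mul, integral_const_mul, integral_const_mul,
        integral_const_mul, integral_const_mul, integral_const_mul, h15, h25]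
      ring
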